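/- There exists a measurable map f defined Lebesgue-almost everywhere on (0,1), piecewise linear and onto [0,1) on each of countably many disjoint intervals whose lengths sum to 1, such that for every α > 0 there exists β > 0 for which the set of points where all iterates of f are defined is not (α,β)-winning for Schmidt's game on [0,1]. -/

import Mathlib

/-- A closed interval given by its center `c` and radius `r > 0`. -/
structure SInt where
  c : ℝ
  r : ℝ
  rpos : 0 < r

/-- The closed interval determined by an `SInt`. -/
def SInt.set (I : SInt) : Set ℝ := Set.Icc (I.c - I.r) (I.c + I.r)

/-- A legal move in Schmidt's game: `J ⊆ I` and `|J| = ρ |I|`. -/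
def legalMove (ρ : ℝ) (J I : SInt) : Prop := J.set ⊆ I.set ∧ J.r = ρ * I.r

/-- `E` is `(α,β)`-winning for Schmidt's game on `[0,1]`: White has a (history-dependent)
strategy `ws` such that against every legal play `B` of Black (with `B 0 ⊆ [0,1]`), all of
White's moves are legal and any point lying in all of White's intervals belongs to `E`. -/
def IsWinningParam (α β : ℝ) (E : Set ℝ) : Prop :=
  ∃ ws : List SInt → SInt,
    ∀ B W : ℕ → SInt,
      (B 0).set ⊆ Set.Icc (0:ℝ) 1 →
      (∀ n, W n = ws (List.ofFn fun i : Fin (n + 1) => B i.val)) →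
      (∀ n, legalMove β (B (n + 1)) (W n)) →
      (∀ n, legalMove α (W n) (B n)) ∧ ∀ x : ℝ, (∀ n, x ∈ (W n).set) → x ∈ E

/-- `E` is `α`-winning if it is `(α,β)`-winning for every `β ∈ (0,1)`. -/
def IsWinning (α : ℝ) (E : Set ℝ) : Prop :=
  ∀ β : ℝ, 0 < β → β < 1 → IsWinningParam α β E

/-- In the `(α,β)`-game started from the interval `I`, White has a strategy guaranteeing
(playing legally) that after finitely many moves some interval `W j` satisfies the
target predicate `T`. -/
def WhiteCanReach (α β : ℝ) (I : SInt) (T : Set ℝ → Prop) : Prop :=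
  ∃ ws : List SInt → SInt,
    ∀ B W : ℕ → SInt,
      B 0 = I →
      (∀ n, W n = ws (List.ofFn fun i : Fin (n + 1) => B i.val)) →
      (∀ n, legalMove β (B (n + 1)) (W n)) →
      (∀ n, legalMove α (W n) (B n)) ∧ ∃ j, T (W j).set

/-- An expanding interval map as in the setup: `f` is defined on countably many disjoint
subintervals `[a i, b i)` of `[0,1)` whose lengths sum to `1`, is strictly monotone and
onto `[0,1)` on each piece, and expands distances on each piece. -/
structure ExpandingSystem (ι : Type) where
  f : ℝ → ℝ
  a : ι → ℝ
  b : ι → ℝ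
  hab : ∀ i, a i < b i
  hsub : ∀ i, Set.Ico (a i) (b i) ⊆ Set.Ico (0:ℝ) 1
  hdisj : Pairwise fun i j => Disjoint (Set.Ico (a i) (b i)) (Set.Ico (a j) (b j))
  hsum : ∑' i, (b i - a i) = 1
  hmono : ∀ i, StrictMonoOn f (Set.Ico (a i) (b i)) ∨ StrictAntiOn f (Set.Ico (a i) (b i))
  honto : ∀ i, f '' Set.Ico (a i) (b i) = Set.Ico (0:ℝ) 1
  hexp : ∀ i, ∀ x ∈ Set.Ico (a i) (b i), ∀ y ∈ Set.Ico (a i) (b i), |x - y| ≤ |f x - f y|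

/-- The generation-`n` cylinder `C_{w 0 … w (n-1)}` of an expanding system. -/
def ExpandingSystem.cyl {ι : Type} (S : ExpandingSystem ι) (w : ℕ → ι) (n : ℕ) : Set ℝ :=
  {x | ∀ k < n, S.f^[k] x ∈ Set.Ico (S.a (w k)) (S.b (w k))}

/-- Condition (i): there is `α₀ > 0` such that for each generation `k`, each starting
interval `I ⊆ [0,1]` and each `β ∈ (0,1)`, in the `(α₀,β)`-game White can in finitely many
turns place his interval inside a single generation-`k` cylinder. -/
def CondI {ι : Type} (S : ExpandingSystem ι) (α₀ : ℝ) : Prop :=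
  ∀ (k : ℕ) (I : SInt), I.set ⊆ Set.Icc (0:ℝ) 1 →
    ∀ β : ℝ, 0 < β → β < 1 →
      WhiteCanReach α₀ β I fun s => ∃ w : ℕ → ι, s ⊆ S.cyl w k

/-- Condition (ii): a uniform cylinder-ratio decay `|C_{x₁…x_{n+m}}| ≤ g(m) |C_{x₁…x_n}|`
with `g(m) → 0`. -/
def CondII {ι : Type} (S : ExpandingSystem ι) (g : ℕ → ℝ) : Prop :=
  (∀ m, 0 ≤ g m) ∧ Filter.Tendsto g Filter.atTop (nhds 0) ∧
    ∀ (w : ℕ → ι) (n m : ℕ),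
      MeasureTheory.volume (S.cyl w (n + m)) ≤
        ENNReal.ofReal (g m) * MeasureTheory.volume (S.cyl w n)

/-- `x` has a well-defined symbolic expansion: every iterate lies in some piece. -/
def HasExpansion {ι : Type} (S : ExpandingSystem ι) (x : ℝ) : Prop :=
  ∃ w : ℕ → ι, ∀ k : ℕ, S.f^[k] x ∈ Set.Ico (S.a (w k)) (S.b (w k))

/-- The set `G_f(x)` of points whose forward `f`-orbit closure avoids `x`. -/
def Gset (f : ℝ → ℝ) (x : ℝ) : Set ℝ :=
  {y | y ∈ Set.Ico (0:ℝ) 1 ∧ x ∉ closure (Set.range fun n : ℕ => f^[n] y)}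


namespace BadGame
open MeasureTheory
open scoped ENNReal

/-- half the number of cells in block `i` -/
def half (i : ℕ) : ℕ := 2 * (i + 1)
/-- number of cells in block `i` -/
def Nb (i : ℕ) : ℕ := 4 * (i + 1)
/-- left endpoint (= length) of block `i` : the block is `[2^{-(i+1)}, 2^{-i})`. -/
noncomputable def blA (i : ℕ) : ℝ := (2:ℝ)⁻¹ ^ (i + 1)

lemma Nb_eq (i : ℕ) : Nb i = 2 * half i := by simp [Nb, half]; ring
lemma half_pos (i : ℕ) : 0 < half i := by simp [half]
lemma blA_pos (i : ℕ) : 0 < blA i := by unfold blA; positivity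
lemma blA_add (i : ℕ) : blA i + blA i = (2:ℝ)⁻¹ ^ i := by
  simp [blA, pow_succ]; ring

/-- left endpoint of a cell given by a word -/
noncomputable def cL (N : ℝ) : ℝ → ℝ → List ℕ → ℝ
  | A, _, [] => A
  | A, L, j :: w => cL N (A + j * (L / N)) (L / N) w

/-- the half-open cell determined by a word -/
noncomputable def cellSet (N A L : ℝ) (w : List ℕ) : Set ℝ :=
  Set.Ico (cL N A L w) (cL N A L w + L / N ^ w.length)

lemma cellSet_nil (N A L : ℝ) : cellSet N A L [] = Set.Ico A (A + L) := by
  simp [cellSet, cL]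

lemma cL_cons (N A L : ℝ) (j : ℕ) (w : List ℕ) :
    cL N A L (j :: w) = cL N (A + j * (L / N)) (L / N) w := rfl

lemma div_pow_succ (L N : ℝ) (k : ℕ) : (L / N) / N ^ k = L / N ^ (k + 1) := by
  rw [div_div, ← pow_succ']

lemma cellSet_cons (N A L : ℝ) (j : ℕ) (w : List ℕ) :
    cellSet N A L (j :: w) = cellSet N (A + j * (L / N)) (L / N) w := by
  unfold cellSet
  rw [cL_cons, List.length_cons, ← div_pow_succ]

lemma cell_subset {N : ℝ} (hN : 0 < N) :
    ∀ (w : List ℕ) (A L : ℝ), 0 < L → (∀ j ∈ w, (j : ℝ) + 1 ≤ N) →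
      cellSet N A L w ⊆ Set.Ico A (A + L) := by
  intro w
  induction w with
  | nil => intro A L hL _; rw [cellSet_nil]
  | cons j w ih =>
    intro A L hL hb
    rw [cellSet_cons]
    have hℓ : 0 < L / N := by positivity
    refine (ih _ _ hℓ fun l hl => hb l (List.mem_cons_of_mem _ hl)).trans ?_
    apply Set.Ico_subset_Ico
    · nlinarith [Nat.cast_nonneg (α := ℝ) j]
    · have hj : (j : ℝ) + 1 ≤ N := hb j (List.mem_cons_self)
      have : ((j : ℝ) + 1) * (L / N) ≤ N * (L / N) := by nlinarith
      have hNL : N * (L / N) = L := by field_simp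
      nlinarith

lemma cell_disj_head {N : ℝ} (hN : 0 < N) {A L : ℝ} (hL : 0 < L) {j j' : ℕ}
    (w w' : List ℕ) (hj : (j : ℝ) + 1 ≤ N) (hj' : ((j' : ℝ)) + 1 ≤ N)
    (hw : ∀ l ∈ w, (l : ℝ) + 1 ≤ N) (hw' : ∀ l ∈ w', (l : ℝ) + 1 ≤ N)
    (hne : j ≠ j') :
    Disjoint (cellSet N A L (j :: w)) (cellSet N A L (j' :: w')) := by
  rw [cellSet_cons, cellSet_cons]
  have hℓ : 0 < L / N := by positivity
  refine Disjoint.mono (cell_subset hN _ _ _ hℓ hw) (cell_subset hN _ _ _ hℓ hw') ?_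
  rw [Set.Ico_disjoint_Ico]
  rcases lt_or_gt_of_ne hne with h | h
  · have : (j : ℝ) + 1 ≤ (j' : ℝ) := by exact_mod_cast h
    refine le_trans (min_le_left _ _) (le_trans ?_ (le_max_right _ _))
    nlinarith
  · have : (j' : ℝ) + 1 ≤ (j : ℝ) := by exact_mod_cast h
    refine le_trans (min_le_right _ _) (le_trans ?_ (le_max_left _ _))
    nlinarith

lemma cell_disj_samelen {N : ℝ} (hN : 0 < N) :
    ∀ (w w' : List ℕ) (A L : ℝ), 0 < L → (∀ l ∈ w, (l : ℝ) + 1 ≤ N) →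
      (∀ l ∈ w', (l : ℝ) + 1 ≤ N) → w.length = w'.length → w ≠ w' →
      Disjoint (cellSet N A L w) (cellSet N A L w') := by
  intro w
  induction w with
  | nil =>
    intro w' A L _ _ _ hlen hne
    cases w' with
    | nil => exact absurd rfl hne
    | cons _ _ => simp at hlen
  | cons j t ih =>
    intro w' A L hL hb hb' hlen hne
    cases w' with
    | nil => simp at hlen
    | cons j' t' =>
      by_cases hj : j = j'
      · subst hj
        have ht : t ≠ t' := by intro h; exact hne (by rw [h])
        rw [cellSet_cons, cellSet_cons]
        exact ih t' _ _ (by positivity)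
          (fun l hl => hb l (List.mem_cons_of_mem _ hl))
          (fun l hl => hb' l (List.mem_cons_of_mem _ hl))
          (by simpa using hlen) ht
      · exact cell_disj_head hN hL t t' (hb j (List.mem_cons_self))
          (hb' j' (List.mem_cons_self))
          (fun l hl => hb l (List.mem_cons_of_mem _ hl))
          (fun l hl => hb' l (List.mem_cons_of_mem _ hl)) hj

lemma cL_concat {N : ℝ} :
    ∀ (w : List ℕ) (A L : ℝ) (c : ℕ),
      cL N A L (w ++ [c]) = cL N A L w + c * ((L / N ^ w.length) / N) := by
  intro w
  induction w with
  | nil => intro A L c; simp [cL]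
  | cons j t ih =>
    intro A L c
    rw [List.cons_append, cL_cons, cL_cons, ih, List.length_cons, div_pow_succ]


/-- the word (cell address) of a defined piece: even letters then one odd letter -/
def wordOf (es : List ℕ) (o : ℕ) : List ℕ := es.map (fun e => 2 * e) ++ [2 * o + 1]

lemma wordOf_nil (o : ℕ) : wordOf [] o = [2 * o + 1] := rfl
lemma wordOf_cons (e : ℕ) (es : List ℕ) (o : ℕ) :
    wordOf (e :: es) o = (2 * e) :: wordOf es o := rfl
lemma wordOf_length (es : List ℕ) (o : ℕ) : (wordOf es o).length = es.length + 1 := by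
  simp [wordOf]

lemma wordOf_mem_lt {m : ℕ} {es : List ℕ} {o : ℕ} (hes : ∀ e ∈ es, e < m) (ho : o < m) :
    ∀ l ∈ wordOf es o, l < 2 * m := by
  intro l hl
  rcases List.mem_append.1 hl with h | h
  · rcases List.mem_map.1 h with ⟨e, he, rfl⟩
    have := hes e he; omega
  · simp at h; omega

lemma lt_cast {l n : ℕ} (h : l < n) : (l : ℝ) + 1 ≤ (n : ℝ) := by exact_mod_cast h

lemma wordOf_bound {m : ℕ} {es : List ℕ} {o : ℕ} (hes : ∀ e ∈ es, e < m) (ho : o < m) :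
    ∀ l ∈ wordOf es o, (l : ℝ) + 1 ≤ ((2 * m : ℕ) : ℝ) :=
  fun l hl => lt_cast (wordOf_mem_lt hes ho l hl)

/-- two distinct pieces (in the same block subtree) are disjoint -/
lemma piece_disj {m : ℕ} {N : ℝ} (hN : 0 < N) (hNm : N = ((2 * m : ℕ) : ℝ)) :
    ∀ (es : List ℕ) (o : ℕ) (es' : List ℕ) (o' : ℕ) (A L : ℝ), 0 < L →
      (∀ e ∈ es, e < m) → o < m → (∀ e ∈ es', e < m) → o' < m →
      ¬(es = es' ∧ o = o') →
      Disjoint (cellSet N A L (wordOf es o)) (cellSet N A L (wordOf es' o')) := by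
  intro es
  induction es with
  | nil =>
    intro o es' o' A L hL _ ho hes' ho' hne
    cases es' with
    | nil =>
      have hoo : o ≠ o' := fun h => hne ⟨rfl, h⟩
      rw [wordOf_nil, wordOf_nil]
      exact cell_disj_head hN hL [] [] (hNm ▸ lt_cast (by omega)) (hNm ▸ lt_cast (by omega))
        (by simp) (by simp) (by omega)
    | cons e' t' =>
      rw [wordOf_nil, wordOf_cons]
      exact cell_disj_head hN hL [] _ (hNm ▸ lt_cast (by omega))
        (hNm ▸ lt_cast (by have := hes' e' (List.mem_cons_self); omega))
        (by simp)
        (hNm ▸ wordOf_bound (fun l hl => hes' l (List.mem_cons_of_mem _ hl)) ho')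
        (by omega)
  | cons e t ih =>
    intro o es' o' A L hL hes ho hes' ho' hne
    have he : e < m := hes e (List.mem_cons_self)
    have ht : ∀ l ∈ t, l < m := fun l hl => hes l (List.mem_cons_of_mem _ hl)
    cases es' with
    | nil =>
      rw [wordOf_cons, wordOf_nil]
      exact cell_disj_head hN hL _ [] (hNm ▸ lt_cast (by omega))
        (hNm ▸ lt_cast (by omega))
        (hNm ▸ wordOf_bound ht ho) (by simp) (by omega)
    | cons e' t' =>
      have he' : e' < m := hes' e' (List.mem_cons_self)
      have ht' : ∀ l ∈ t', l < m := fun l hl => hes' l (List.mem_cons_of_mem _ hl)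
      by_cases hee : e = e'
      · subst hee
        rw [wordOf_cons, wordOf_cons, cellSet_cons, cellSet_cons]
        exact ih o t' o' _ _ (by positivity) ht ho ht' ho'
          (fun ⟨h1, h2⟩ => hne ⟨by rw [h1], h2⟩)
      · rw [wordOf_cons, wordOf_cons]
        exact cell_disj_head hN hL _ _ (hNm ▸ lt_cast (by omega))
          (hNm ▸ lt_cast (by omega)) (hNm ▸ wordOf_bound ht ho)
          (hNm ▸ wordOf_bound ht' ho') (by omega)

/-- addresses of defined pieces: block, list of (half-)even letters, odd letter -/
def Addr : Type := {q : ℕ × List ℕ × ℕ // q.2.2 < half q.1 ∧ ∀ e ∈ q.2.1, e < half q.1}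

instance : Encodable Addr := by unfold Addr; infer_instance
instance : Infinite Addr :=
  Infinite.of_injective (fun n : ℕ => (⟨(n, [], 0), by simp [half]⟩ : Addr))
    (by intro a b h; simpa using congrArg (fun q : Addr => q.1.1) h)

noncomputable def eA : Addr ≃ ℕ := @Denumerable.eqv Addr (Denumerable.ofEncodableOfInfinite _)

noncomputable def pN (p : Addr) : ℝ := ((Nb p.1.1 : ℕ) : ℝ)
noncomputable def pA (p : Addr) : ℝ := blA p.1.1
def pw (p : Addr) : List ℕ := wordOf p.1.2.1 p.1.2.2
noncomputable def pL (p : Addr) : ℝ := cL (pN p) (pA p) (pA p) (pw p)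
noncomputable def plen (p : Addr) : ℝ := pA p / (pN p) ^ (pw p).length
noncomputable def pieceSet (p : Addr) : Set ℝ := cellSet (pN p) (pA p) (pA p) (pw p)

lemma pN_pos (p : Addr) : 0 < pN p := by
  unfold pN
  have : 0 < Nb p.1.1 := by simp [Nb]
  exact_mod_cast this
lemma pN_eq (p : Addr) : pN p = ((2 * half p.1.1 : ℕ) : ℝ) := by rw [pN, Nb_eq]
lemma plen_pos (p : Addr) : 0 < plen p := by
  have h1 := blA_pos p.1.1
  have h2 := pN_pos p
  unfold plen pA
  positivity
lemma pieceSet_eq (p : Addr) : pieceSet p = Set.Ico (pL p) (pL p + plen p) := rfl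

lemma pw_bound (p : Addr) : ∀ l ∈ pw p, (l : ℝ) + 1 ≤ pN p := by
  rw [pN_eq]
  exact wordOf_bound p.2.2 p.2.1

lemma pieceSet_subset_block (p : Addr) :
    pieceSet p ⊆ Set.Ico (blA p.1.1) (blA p.1.1 + blA p.1.1) :=
  cell_subset (pN_pos p) _ _ _ (blA_pos _) (pw_bound p)

lemma block_subset (i : ℕ) : Set.Ico (blA i) (blA i + blA i) ⊆ Set.Ioo (0:ℝ) 1 := by
  intro x hx
  rcases hx with ⟨h1, h2⟩
  constructor
  · exact lt_of_lt_of_le (blA_pos i) h1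
  · calc x < blA i + blA i := h2
      _ = (2:ℝ)⁻¹ ^ i := blA_add i
      _ ≤ 1 := pow_le_one₀ (by norm_num) (by norm_num)

lemma block_disj {i i' : ℕ} (h : i ≠ i') :
    Disjoint (Set.Ico (blA i) (blA i + blA i)) (Set.Ico (blA i') (blA i' + blA i')) := by
  have key : ∀ {a b : ℕ}, a < b →
      Disjoint (Set.Ico (blA a) (blA a + blA a)) (Set.Ico (blA b) (blA b + blA b)) := by
    intro a b hab
    rw [Set.disjoint_left]
    rintro x ⟨ha1, _⟩ ⟨_, hb2⟩
    have : blA b + blA b ≤ blA a := by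
      rw [blA_add, blA]
      exact pow_le_pow_of_le_one (by norm_num) (by norm_num) (by omega)
    linarith
  rcases lt_or_gt_of_ne h with hlt | hgt
  · exact key hlt
  · exact (key hgt).symm

lemma addr_disj : Pairwise fun p q : Addr => Disjoint (pieceSet p) (pieceSet q) := by
  rintro ⟨⟨i, es, o⟩, ho, hes⟩ ⟨⟨i', es', o'⟩, ho', hes'⟩ hpq
  by_cases hblk : i = i'
  · subst hblk
    have hdata : ¬(es = es' ∧ o = o') := by
      rintro ⟨rfl, rfl⟩; exact hpq rfl
    unfold pieceSet pw pN pA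
    simp only
    refine piece_disj (m := half i) ?_ ?_ es o es' o' _ _ (blA_pos _) hes ho hes' ho' hdata
    · have : 0 < Nb i := by simp [Nb]
      exact_mod_cast this
    · rw [Nb_eq]
  · exact Disjoint.mono
      (pieceSet_subset_block ⟨(i, es, o), ho, hes⟩)
      (pieceSet_subset_block ⟨(i', es', o'), ho', hes'⟩) (block_disj hblk)

lemma piece_unique {x : ℝ} {p q : Addr} (hp : x ∈ pieceSet p) (hq : x ∈ pieceSet q) : p = q := by
  by_contra hne
  exact Set.disjoint_left.1 (addr_disj hne) hp hq


noncomputable def Ipieces : ℕ → Set ℝ := fun n => pieceSet (eA.symm n)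
noncomputable def af (p : Addr) : ℝ → ℝ := fun y => (y - pL p) / plen p

open Classical in
noncomputable def fmap : ℝ → ℝ := fun x =>
  if h : ∃ p : Addr, x ∈ pieceSet p then af (Classical.choose h) x else 0

lemma fmap_on (p : Addr) {x : ℝ} (hx : x ∈ pieceSet p) : fmap x = af p x := by
  have h : ∃ q : Addr, x ∈ pieceSet q := ⟨p, hx⟩
  rw [fmap]
  rw [dif_pos h, piece_unique (Classical.choose_spec h) hx]

lemma af_measurable (p : Addr) : Measurable (af p) := by
  unfold af
  exact (measurable_id.sub measurable_const).div_const _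

lemma measurableSet_piece (p : Addr) : MeasurableSet (pieceSet p) := by
  rw [pieceSet_eq]; exact measurableSet_Ico

lemma fmap_measurable : Measurable fmap := by
  have hF : ∀ n : ℕ, Measurable (fun x => ∑ j ∈ Finset.range n,
      (pieceSet (eA.symm j)).indicator (af (eA.symm j)) x) := by
    intro n
    apply Finset.measurable_sum
    intro j _
    exact (af_measurable _).indicator (measurableSet_piece _)
  apply measurable_of_tendsto_metrizable hF
  rw [tendsto_pi_nhds]
  intro x
  by_cases h : ∃ p : Addr, x ∈ pieceSet p
  · obtain ⟨p, hp⟩ := h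
    refine tendsto_const_nhds.congr' ?_
    filter_upwards [Filter.eventually_ge_atTop (eA p + 1)] with n hn
    rw [Finset.sum_eq_single (eA p)]
    · rw [Set.indicator_of_mem (by simpa using hp), fmap_on p hp]
      simp
    · intro j _ hj
      apply Set.indicator_of_notMem
      intro hxj
      exact hj (by rw [← Equiv.apply_symm_apply eA j, piece_unique hxj hp])
    · intro habs
      exact absurd (Finset.mem_range.2 (by omega)) habs
  · have hz : ∀ n : ℕ, (∑ j ∈ Finset.range n,
        (pieceSet (eA.symm j)).indicator (af (eA.symm j)) x) = 0 := by
      intro n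
      apply Finset.sum_eq_zero
      intro j _
      exact Set.indicator_of_notMem (fun hxj => h ⟨_, hxj⟩) _
    have hf : fmap x = 0 := dif_neg h
    simp only [hz, hf]
    exact tendsto_const_nhds

lemma fmap_affine (p : Addr) : ∀ x ∈ pieceSet p,
    fmap x = (1 / plen p) * x + (-(pL p) / plen p) := by
  intro x hx
  rw [fmap_on p hx]
  unfold af
  ring

lemma fmap_image (p : Addr) : fmap '' pieceSet p = Set.Ico (0:ℝ) 1 := by
  have hl := plen_pos p
  ext y
  constructor
  · rintro ⟨x, hx, rfl⟩
    rw [fmap_on p hx]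
    rw [pieceSet_eq] at hx
    obtain ⟨h1, h2⟩ := hx
    unfold af
    constructor
    · apply div_nonneg (by linarith) (le_of_lt hl)
    · rw [div_lt_one hl]; linarith
  · rintro ⟨h0, h1⟩
    have hmem : pL p + y * plen p ∈ pieceSet p := by
      rw [pieceSet_eq]
      constructor
      · nlinarith
      · nlinarith
    refine ⟨pL p + y * plen p, hmem, ?_⟩
    rw [fmap_on p hmem]
    unfold af
    field_simp
    ring

/-- the remaining (recursed) region at depth `d` -/
noncomputable def Rem (i : ℕ) : ℕ → ℝ → ℝ → Set ℝ
  | 0, A, L => Set.Ico A (A + L)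
  | d+1, A, L => ⋃ e ∈ Finset.range (half i),
      Rem i d (A + ((2*e : ℕ) : ℝ) * (L / ((Nb i : ℕ) : ℝ))) (L / ((Nb i : ℕ) : ℝ))

lemma Nb_cast_pos (i : ℕ) : (0:ℝ) < ((Nb i : ℕ) : ℝ) := by
  have : 0 < Nb i := by simp [Nb]
  exact_mod_cast this

lemma Rem_vol (i : ℕ) : ∀ (d : ℕ) (A L : ℝ), 0 ≤ L →
    volume (Rem i d A L) ≤ ENNReal.ofReal ((2:ℝ)⁻¹ ^ d * L) := by
  intro d
  induction d with
  | zero => intro A L hL; simp [Rem, Real.volume_Ico]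
  | succ d ih =>
    intro A L hL
    have hN := Nb_cast_pos i
    calc volume (Rem i (d+1) A L)
        ≤ ∑ e ∈ Finset.range (half i),
            volume (Rem i d (A + ((2*e : ℕ) : ℝ) * (L / ((Nb i : ℕ) : ℝ))) (L / ((Nb i : ℕ) : ℝ))) :=
          measure_biUnion_finset_le _ _
      _ ≤ ∑ _e ∈ Finset.range (half i), ENNReal.ofReal ((2:ℝ)⁻¹ ^ d * (L / ((Nb i : ℕ) : ℝ))) :=
          Finset.sum_le_sum (fun e _ => ih _ _ (by positivity))
      _ = (half i : ℕ) • ENNReal.ofReal ((2:ℝ)⁻¹ ^ d * (L / ((Nb i : ℕ) : ℝ))) := by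
          rw [Finset.sum_const, Finset.card_range]
      _ = ENNReal.ofReal ((half i : ℝ) * ((2:ℝ)⁻¹ ^ d * (L / ((Nb i : ℕ) : ℝ)))) := by
          rw [nsmul_eq_mul, ← ENNReal.ofReal_natCast (half i), ← ENNReal.ofReal_mul (by positivity)]
      _ = ENNReal.ofReal ((2:ℝ)⁻¹ ^ (d+1) * L) := by
          congr 1
          have hNb : ((Nb i : ℕ) : ℝ) = 2 * ((half i : ℕ) : ℝ) := by
            rw [Nb_eq]; push_cast; ring
          have hh : (0:ℝ) < ((half i : ℕ) : ℝ) := by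
            have := half_pos i; exact_mod_cast this
          rw [hNb, pow_succ]
          field_simp

lemma Rem_cover (i : ℕ) {x : ℝ} :
    ∀ (d : ℕ) (A L : ℝ), 0 < L → x ∈ Set.Ico A (A + L) →
      (∀ (es : List ℕ) (o : ℕ), (∀ e ∈ es, e < half i) → o < half i →
        x ∉ cellSet ((Nb i : ℕ) : ℝ) A L (wordOf es o)) →
      x ∈ Rem i d A L := by
  intro d
  induction d with
  | zero => intro A L _ hx _; exact hx
  | succ d ih =>
    intro A L hL hx hcell
    have hN := Nb_cast_pos i
    set Nr : ℝ := ((Nb i : ℕ) : ℝ) with hNr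
    set ℓ : ℝ := L / Nr with hℓdef
    have hℓ : 0 < ℓ := by positivity
    set c : ℕ := ⌊(x - A) / ℓ⌋₊ with hc
    have hxA : 0 ≤ x - A := by have := hx.1; linarith
    have h1 : (c:ℝ) * ℓ ≤ x - A := by
      have := Nat.floor_le (a := (x - A)/ℓ) (by positivity)
      calc (c:ℝ) * ℓ ≤ ((x - A)/ℓ) * ℓ := by nlinarith
        _ = x - A := by field_simp
    have h2 : x - A < ((c:ℝ) + 1) * ℓ := by
      have := Nat.lt_floor_add_one ((x - A)/ℓ)
      calc x - A = ((x - A)/ℓ) * ℓ := by field_simp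
        _ < ((c:ℝ) + 1) * ℓ := by nlinarith
    have hcN : c < Nb i := by
      by_contra hge
      push_neg at hge
      have hNc : (Nr : ℝ) ≤ (c : ℝ) := by rw [hNr]; exact_mod_cast hge
      have hLc : L ≤ (c:ℝ) * ℓ := by
        rw [hℓdef]
        calc L = Nr * (L / Nr) := by field_simp
          _ ≤ (c:ℝ) * (L / Nr) := by
            have hLN : 0 < L / Nr := by positivity
            nlinarith [hNc]
      have := hx.2
      linarith
    rcases Nat.even_or_odd c with he | ho
    · obtain ⟨e, hee⟩ := he
      have heh : e < half i := by
        have := Nb_eq i; omega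
      rw [Rem]
      apply Set.mem_biUnion (Finset.mem_range.2 heh)
      have hcast : ((2*e : ℕ) : ℝ) = (c : ℝ) := by
        have : c = 2 * e := by omega
        rw [this]
      apply ih (A + ((2*e : ℕ) : ℝ) * ℓ) ℓ hℓ
      · constructor
        · rw [hcast]; linarith
        · rw [hcast]; linarith
      · intro es o hes hoh hmem
        apply hcell (e :: es) o (by intro l hl; rcases List.mem_cons.1 hl with rfl | hl; exact heh; exact hes l hl) hoh
        rw [wordOf_cons, cellSet_cons]
        exact hmem
    · obtain ⟨o, hoo⟩ := ho
      have hoh : o < half i := by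
        have := Nb_eq i; omega
      exfalso
      apply hcell [] o (by simp) hoh
      rw [wordOf_nil]
      have hcast : ((2*o + 1 : ℕ) : ℝ) = (c : ℝ) := by
        have : c = 2 * o + 1 := by omega
        rw [this]
      constructor
      · show cL Nr A L [2*o+1] ≤ x
        rw [cL_cons]
        show A + ((2*o+1 : ℕ) : ℝ) * (L / Nr) ≤ x
        rw [hcast]
        linarith
      · show x < cL Nr A L [2*o+1] + L / Nr ^ ([2*o+1] : List ℕ).length
        rw [cL_cons]
        show x < A + ((2*o+1 : ℕ) : ℝ) * (L / Nr) + L / Nr ^ (1:ℕ)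
        rw [hcast, pow_one]
        linarith


noncomputable def BadSet : Set ℝ := ⋃ i : ℕ, ⋂ d : ℕ, Rem i d (blA i) (blA i)

lemma bad_null : volume BadSet = 0 := by
  rw [BadSet, measure_iUnion_null_iff]
  intro i
  have hb : ∀ d : ℕ, volume (⋂ d' : ℕ, Rem i d' (blA i) (blA i)) ≤
      ENNReal.ofReal ((2:ℝ)⁻¹ ^ d * blA i) := fun d =>
    le_trans (measure_mono (Set.iInter_subset _ d)) (Rem_vol i d _ _ (le_of_lt (blA_pos i)))
  have ht : Filter.Tendsto (fun d : ℕ => ENNReal.ofReal ((2:ℝ)⁻¹ ^ d * blA i))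
      Filter.atTop (nhds 0) := by
    rw [← ENNReal.ofReal_zero]
    apply ENNReal.tendsto_ofReal
    have h := tendsto_pow_atTop_nhds_zero_of_lt_one
      (by norm_num : (0:ℝ) ≤ 2⁻¹) (by norm_num : (2:ℝ)⁻¹ < 1)
    simpa using h.mul_const (blA i)
  exact le_zero_iff.1 (ge_of_tendsto' ht hb)

lemma Ipieces_subset (n : ℕ) : Ipieces n ⊆ Set.Ioo (0:ℝ) 1 :=
  (pieceSet_subset_block _).trans (block_subset _)

lemma union_cover : Set.Ioo (0:ℝ) 1 ⊆ (⋃ n : ℕ, Ipieces n) ∪ BadSet := by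
  intro x hx
  by_cases hU : x ∈ ⋃ n : ℕ, Ipieces n
  · exact Or.inl hU
  · right
    have hex : ∃ i : ℕ, blA i ≤ x := by
      obtain ⟨n, hn⟩ := exists_pow_lt_of_lt_one hx.1 (by norm_num : (2:ℝ)⁻¹ < 1)
      exact ⟨n, le_of_lt (lt_of_le_of_lt
        (pow_le_pow_of_le_one (by norm_num) (by norm_num) (Nat.le_succ n)) hn)⟩
    set i₀ := Nat.find hex with hi₀
    have h1 : blA i₀ ≤ x := Nat.find_spec hex
    have h2 : x < blA i₀ + blA i₀ := by
      rw [blA_add]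
      rcases Nat.eq_zero_or_pos i₀ with h | h
      · rw [h]; simpa using hx.2
      · have hmin := Nat.find_min hex (m := i₀ - 1) (by omega)
        have hxlt : x < blA (i₀ - 1) := not_le.1 hmin
        rw [blA] at hxlt
        have heq : (i₀ - 1) + 1 = i₀ := by omega
        rwa [heq] at hxlt
    have hnp : ∀ (es : List ℕ) (o : ℕ), (∀ e ∈ es, e < half i₀) → o < half i₀ →
        x ∉ cellSet ((Nb i₀ : ℕ) : ℝ) (blA i₀) (blA i₀) (wordOf es o) := by
      intro es o hes ho hmem
      apply hU
      refine Set.mem_iUnion.2 ⟨eA ⟨(i₀, es, o), ho, hes⟩, ?_⟩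
      erw [Ipieces, Equiv.symm_apply_apply]
      exact hmem
    exact Set.mem_iUnion.2 ⟨i₀, Set.mem_iInter.2 fun d =>
      Rem_cover i₀ d _ _ (blA_pos i₀) ⟨h1, h2⟩ hnp⟩

lemma Ipieces_disjoint : Pairwise fun n m : ℕ => Disjoint (Ipieces n) (Ipieces m) :=
  fun _ _ h => addr_disj (eA.symm.injective.ne h)

lemma sum_vol : (∑' n : ℕ, volume (Ipieces n)) = 1 := by
  rw [← measure_iUnion Ipieces_disjoint (fun n => measurableSet_piece _)]
  apply le_antisymm
  · calc volume (⋃ n : ℕ, Ipieces n) ≤ volume (Set.Ioo (0:ℝ) 1) :=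
        measure_mono (Set.iUnion_subset Ipieces_subset)
      _ = 1 := by rw [Real.volume_Ioo]; norm_num
  · calc (1 : ℝ≥0∞) = volume (Set.Ioo (0:ℝ) 1) := by rw [Real.volume_Ioo]; norm_num
      _ ≤ volume ((⋃ n : ℕ, Ipieces n) ∪ BadSet) := measure_mono union_cover
      _ ≤ volume (⋃ n : ℕ, Ipieces n) + volume BadSet := measure_union_le _ _
      _ = volume (⋃ n : ℕ, Ipieces n) := by rw [bad_null, add_zero]


/-! ### The game argument -/

noncomputable def mkB (s : {p : ℝ × ℝ // 0 < p.2}) : SInt :=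
  ⟨s.1.1 + s.1.2 / 2, s.1.2 / 2, by have := s.2; linarith⟩

lemma mkB_set (s : {p : ℝ × ℝ // 0 < p.2}) :
    (mkB s).set = Set.Icc s.1.1 (s.1.1 + s.1.2) := by
  unfold mkB SInt.set
  simp only
  congr 1 <;> ring

lemma mkB_r (s : {p : ℝ × ℝ // 0 < p.2}) : (mkB s).r = s.1.2 / 2 := rfl

noncomputable def stepj (Wn : SInt) (A ℓ : ℝ) : ℤ :=
  if Even ⌈(Wn.c - Wn.r - A) / ℓ⌉ then ⌈(Wn.c - Wn.r - A) / ℓ⌉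
  else ⌈(Wn.c - Wn.r - A) / ℓ⌉ + 1

lemma stepj_spec (Wn : SInt) (A ℓ : ℝ) :
    Even (stepj Wn A ℓ) ∧ ⌈(Wn.c - Wn.r - A) / ℓ⌉ ≤ stepj Wn A ℓ ∧
      stepj Wn A ℓ ≤ ⌈(Wn.c - Wn.r - A) / ℓ⌉ + 1 := by
  unfold stepj
  split_ifs with h
  · exact ⟨h, le_refl _, by omega⟩
  · exact ⟨Int.even_add_one.2 h, by omega, le_refl _⟩

open Classical in
noncomputable def step (αv β : ℝ) (hβ : 0 < β) (N : ℕ) (hN : 0 < N)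
    (Wn : SInt) (s : {p : ℝ × ℝ // 0 < p.2}) : {p : ℝ × ℝ // 0 < p.2} :=
  if legalMove αv Wn (mkB s) then
    ⟨(s.1.1 + (stepj Wn s.1.1 (s.1.2 / N) : ℝ) * (s.1.2 / N), s.1.2 / N), by
      have h2 := s.2
      have hNr : (0:ℝ) < N := by exact_mod_cast hN
      positivity⟩
  else
    ⟨(Wn.c - β * Wn.r, 2 * (β * Wn.r)), by have := Wn.rpos; positivity⟩

noncomputable def St (αv β : ℝ) (hβ : 0 < β) (N : ℕ) (hN : 0 < N) (A₀ : ℝ) (hA : 0 < A₀)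
    (ws : List SInt → SInt) : ℕ → {p : ℝ × ℝ // 0 < p.2}
  | 0 => ⟨(A₀, A₀), hA⟩
  | n + 1 => step αv β hβ N hN
      (ws (List.ofFn fun k : Fin (n + 1) => mkB (St αv β hβ N hN A₀ hA ws k)))
      (St αv β hβ N hN A₀ hA ws n)


lemma step_fallback {αv β : ℝ} (hβ : 0 < β) (hβ1 : β ≤ 1) {N : ℕ} (hN : 0 < N)
    {Wn : SInt} {s : {p : ℝ × ℝ // 0 < p.2}} (hnleg : ¬ legalMove αv Wn (mkB s)) :
    legalMove β (mkB (step αv β hβ N hN Wn s)) Wn := by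
  have hr := Wn.rpos
  have hstep : step αv β hβ N hN Wn s =
      ⟨(Wn.c - β * Wn.r, 2 * (β * Wn.r)), by positivity⟩ := by
    unfold step
    rw [if_neg hnleg]
  rw [hstep]
  constructor
  · rw [mkB_set]
    show Set.Icc (Wn.c - β * Wn.r) (Wn.c - β * Wn.r + 2 * (β * Wn.r)) ⊆ Wn.set
    unfold SInt.set
    apply Set.Icc_subset_Icc <;> nlinarith
  · rw [mkB_r]
    show 2 * (β * Wn.r) / 2 = β * Wn.r
    ring

set_option maxHeartbeats 2000000 in
lemma step_key {αv β : ℝ} (hβ : 0 < β) {N : ℕ} (hN : 0 < N)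
    (hN4 : (4:ℝ) ≤ αv * N) (hαβ : αv * β = 1 / N)
    {Wn : SInt} {s : {p : ℝ × ℝ // 0 < p.2}} (hleg : legalMove αv Wn (mkB s)) :
    legalMove β (mkB (step αv β hβ N hN Wn s)) Wn ∧
    (step αv β hβ N hN Wn s).1.2 = s.1.2 / N ∧
    (∃ j : ℕ, Even j ∧ j < N ∧
      (step αv β hβ N hN Wn s).1.1 = s.1.1 + (j:ℝ) * (s.1.2 / N)) ∧
    s.1.1 ≤ (step αv β hβ N hN Wn s).1.1 ∧
    (step αv β hβ N hN Wn s).1.1 + (step αv β hβ N hN Wn s).1.2 < s.1.1 + s.1.2 := by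
  obtain ⟨⟨A, L⟩, hL⟩ := s
  have hNr : (0:ℝ) < (N:ℝ) := by exact_mod_cast hN
  have hαv : 0 < αv := by nlinarith
  simp only at hL hleg ⊢
  set ℓ : ℝ := L / N with hℓdef
  have hℓ : 0 < ℓ := by rw [hℓdef]; positivity
  set w₁ : ℝ := Wn.c - Wn.r with hw₁
  set w₂ : ℝ := Wn.c + Wn.r with hw₂
  have hWr := Wn.rpos
  have hw12 : w₁ ≤ w₂ := by rw [hw₁, hw₂]; linarith
  have hWset : Wn.set = Set.Icc w₁ w₂ := rfl
  have hBset : (mkB ⟨(A, L), hL⟩).set = Set.Icc A (A + L) := mkB_set _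
  have hsub : Set.Icc w₁ w₂ ⊆ Set.Icc A (A + L) := by
    rw [← hWset, ← hBset]; exact hleg.1
  obtain ⟨hAw, hwL⟩ := (Set.Icc_subset_Icc_iff hw12).1 hsub
  have hrad : Wn.r = αv * (L / 2) := by
    have h := hleg.2
    rwa [mkB_r] at h
  have h2r : w₂ - w₁ = αv * L := by rw [hw₁, hw₂, hrad]; ring
  have hαL : αv * L = αv * (N:ℝ) * ℓ := by rw [hℓdef]; field_simp
  set k : ℤ := ⌈(w₁ - A) / ℓ⌉ with hkdef
  have hk1 : (w₁ - A) / ℓ ≤ (k:ℝ) := Int.le_ceil _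
  have hk2 : (k:ℝ) < (w₁ - A) / ℓ + 1 := Int.ceil_lt_add_one _
  have hwA' : 0 ≤ w₁ - A := by linarith
  have hk0 : 0 ≤ k := Int.ceil_nonneg (div_nonneg hwA' (le_of_lt hℓ))
  obtain ⟨hjeven, hjk1, hjk2⟩ := stepj_spec Wn A ℓ
  set j : ℤ := stepj Wn A ℓ with hjdef
  have hj0 : 0 ≤ j := le_trans hk0 hjk1
  have hjc1 : (k:ℝ) ≤ (j:ℝ) := by exact_mod_cast hjk1
  have hjc2 : (j:ℝ) ≤ (k:ℝ) + 1 := by exact_mod_cast hjk2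
  have hj0r : (0:ℝ) ≤ (j:ℝ) := by exact_mod_cast hj0
  have hjl : w₁ - A ≤ (j:ℝ) * ℓ := by
    have h := (div_le_iff₀ hℓ).1 hk1
    nlinarith
  have hjr : ((j:ℝ) + 1) * ℓ < w₂ - A := by
    have h2 : (k:ℝ) * ℓ < (w₁ - A) + ℓ := by
      have h := (lt_div_iff₀ hℓ).1 (by linarith : (k:ℝ) - 1 < (w₁ - A) / ℓ)
      nlinarith
    have h3ℓ : 3 * ℓ < αv * L := by
      rw [hαL]; nlinarith
    nlinarith
  have hjN : (j:ℝ) + 1 < (N:ℝ) := by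
    have hLN : L = (N:ℝ) * ℓ := by rw [hℓdef]; field_simp
    refine (mul_lt_mul_iff_left₀ hℓ).1 ?_
    linarith
  have hjNz : j + 1 < (N:ℤ) := by exact_mod_cast hjN
  have f1 : w₁ ≤ A + (j:ℝ) * ℓ := by linarith
  have f2 : A + (j:ℝ) * ℓ + ℓ ≤ w₂ := by nlinarith
  have f3 : ℓ / 2 = β * Wn.r := by
    rw [hrad, hℓdef]
    rw [show β * (αv * (L/2)) = (αv * β) * (L/2) by ring, hαβ]
    field_simp
  have f4 : A ≤ A + (j:ℝ) * ℓ := by nlinarith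
  have f5 : A + (j:ℝ) * ℓ + ℓ < A + L := by
    have : w₂ ≤ A + L := hwL
    nlinarith
  have fcast : ((j.toNat : ℕ) : ℝ) = (j : ℝ) := by
    exact_mod_cast congrArg (Int.cast : ℤ → ℝ) (Int.toNat_of_nonneg hj0)
  have hstep : step αv β hβ N hN Wn ⟨(A, L), hL⟩ =
      ⟨(A + (stepj Wn A (L / N) : ℝ) * (L / N), L / N), by positivity⟩ := by
    unfold step
    rw [if_pos hleg]
  have hfst : (step αv β hβ N hN Wn ⟨(A, L), hL⟩).1.1 = A + (j:ℝ) * ℓ := by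
    have h := congrArg (fun z : {p : ℝ × ℝ // 0 < p.2} => z.1.1) hstep
    simp only at h
    rw [h, ← hℓdef, ← hjdef]
  have hsnd : (step αv β hβ N hN Wn ⟨(A, L), hL⟩).1.2 = ℓ := by
    have h := congrArg (fun z : {p : ℝ × ℝ // 0 < p.2} => z.1.2) hstep
    simp only at h
    rw [h, hℓdef]
  have hBr1 : (mkB (step αv β hβ N hN Wn ⟨(A, L), hL⟩)).r = ℓ / 2 := by
    rw [mkB_r, hsnd]
  have hBset1 : (mkB (step αv β hβ N hN Wn ⟨(A, L), hL⟩)).set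
      = Set.Icc (A + (j:ℝ) * ℓ) (A + (j:ℝ) * ℓ + ℓ) := by
    rw [mkB_set, hfst, hsnd]
  refine ⟨⟨?_, ?_⟩, by rw [hsnd, hℓdef], ⟨j.toNat, ?_, ?_, ?_⟩, ?_, ?_⟩
  · rw [hBset1, hWset]
    exact Set.Icc_subset_Icc f1 f2
  · rw [hBr1]
    exact f3
  · have h := hjeven
    rw [← Int.toNat_of_nonneg hj0] at h
    exact (Int.even_coe_nat _).1 h
  · omega
  · rw [hfst, fcast, hℓdef]
  · rw [hfst]
    exact f4
  · rw [hfst, hsnd]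
    exact f5


set_option maxHeartbeats 2000000 in
lemma not_winning {α : ℝ} (hα : 0 < α) :
    ∃ β : ℝ, 0 < β ∧ β < 1 ∧
      ¬ IsWinningParam α β {x | ∀ n : ℕ, fmap^[n] x ∈ ⋃ j, Ipieces j} := by
  classical
  set i : ℕ := ⌈1/α⌉₊ with hidef
  have hiα : 1 ≤ α * ((i:ℝ) + 1) := by
    rcases le_or_gt 1 α with h1 | h1
    · nlinarith [Nat.cast_nonneg (α := ℝ) i]
    · have h2 : 1/α ≤ (i:ℝ) := Nat.le_ceil _
      nlinarith [(div_le_iff₀ hα).1 h2]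
  set N : ℕ := Nb i with hNdef
  have hNpos : 0 < N := by rw [hNdef, Nb]; omega
  have hNr : (0:ℝ) < (N:ℝ) := by exact_mod_cast hNpos
  have hNcast : ((N:ℕ):ℝ) = 4 * ((i:ℝ) + 1) := by rw [hNdef, Nb]; push_cast; ring
  have hN4 : (4:ℝ) ≤ α * N := by rw [hNcast]; nlinarith
  have hαN : 0 < α * N := by linarith
  set β : ℝ := 1 / (α * N) with hβdef
  have hβpos : 0 < β := by rw [hβdef]; positivity
  have hβ1 : β < 1 := by rw [hβdef, div_lt_one hαN]; linarith
  have hαβ : α * β = 1 / N := by rw [hβdef]; field_simp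
  refine ⟨β, hβpos, hβ1, ?_⟩
  rintro ⟨ws, hws⟩
  set A₀ : ℝ := blA i with hA₀def
  have hA₀ : 0 < A₀ := blA_pos i
  set S : ℕ → {p : ℝ × ℝ // 0 < p.2} := St α β hβpos N hNpos A₀ hA₀ ws with hSdef
  set B : ℕ → SInt := fun n => mkB (S n) with hBdef
  set W : ℕ → SInt := fun n => ws (List.ofFn fun k : Fin (n+1) => B k.val) with hWdef
  have hSsucc : ∀ n, S (n+1) = step α β hβpos N hNpos (W n) (S n) := by
    intro n
    rw [hSdef, St]
  have hs0A : (S 0).1.1 = A₀ := by rw [hSdef, St]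
  have hs0L : (S 0).1.2 = A₀ := by rw [hSdef, St]
  have hB1 : ∀ n, B (n+1) = mkB (step α β hβpos N hNpos (W n) (S n)) := by
    intro n
    rw [hBdef]
    simp only
    rw [hSsucc]
  have hBleg : ∀ n, legalMove β (B (n+1)) (W n) := by
    intro n
    rw [hB1]
    by_cases h : legalMove α (W n) (mkB (S n))
    · exact (step_key hβpos hNpos hN4 hαβ h).1
    · exact step_fallback hβpos (le_of_lt hβ1) hNpos h
  have hB0 : (B 0).set ⊆ Set.Icc (0:ℝ) 1 := by
    have hs0 : S 0 = ⟨(A₀, A₀), hA₀⟩ := by rw [hSdef, St]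
    rw [hBdef]
    simp only
    rw [hs0, mkB_set]
    intro y hy
    have h1 : A₀ + A₀ ≤ 1 := by
      rw [hA₀def, blA_add]
      exact pow_le_one₀ (by norm_num) (by norm_num)
    obtain ⟨hy1, hy2⟩ := hy
    exact ⟨by linarith, by linarith⟩
  obtain ⟨Hleg, Hcap⟩ := hws B W hB0 (fun n => rfl) hBleg
  have hkey := fun n => step_key hβpos hNpos hN4 hαβ
    (show legalMove α (W n) (mkB (S n)) from Hleg n)
  have hmono : ∀ n, (S n).1.1 ≤ (S (n+1)).1.1 := by
    intro n
    rw [hSsucc]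
    exact (hkey n).2.2.2.1
  have hdec : ∀ n, (S (n+1)).1.1 + (S (n+1)).1.2 < (S n).1.1 + (S n).1.2 := by
    intro n
    rw [hSsucc]
    exact (hkey n).2.2.2.2
  have hword : ∀ n, ∃ w : List ℕ, w.length = n ∧ (∀ l ∈ w, Even l ∧ l < N) ∧
      (S n).1.1 = cL (N:ℝ) A₀ A₀ w ∧ (S n).1.2 = A₀ / (N:ℝ)^n := by
    intro n
    induction n with
    | zero =>
      exact ⟨[], rfl, by simp, by rw [hs0A]; rfl, by rw [hs0L]; simp⟩
    | succ n ih =>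
      obtain ⟨w, hwlen, hwb, hwA, hwL⟩ := ih
      obtain ⟨j, hjev, hjN, hjA⟩ := (hkey n).2.2.1
      refine ⟨w ++ [j], by simp [hwlen], ?_, ?_, ?_⟩
      · intro l hl
        rcases List.mem_append.1 hl with h | h
        · exact hwb l h
        · simp at h
          subst h
          exact ⟨hjev, hjN⟩
      · rw [cL_concat, hwlen, ← hwA, ← hwL]
        rw [hSsucc]
        exact hjA
      · rw [hSsucc]
        rw [(hkey n).2.1, hwL, div_div, ← pow_succ]
  have hAmono : Monotone (fun n => (S n).1.1) := monotone_nat_of_le_succ hmono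
  have hsum_anti : Antitone (fun n => (S n).1.1 + (S n).1.2) :=
    antitone_nat_of_succ_le (fun n => le_of_lt (hdec n))
  have hbdd : BddAbove (Set.range fun n => (S n).1.1) := by
    refine ⟨(S 0).1.1 + (S 0).1.2, ?_⟩
    rintro _ ⟨m, rfl⟩
    calc (S m).1.1 ≤ (S m).1.1 + (S m).1.2 := le_add_of_nonneg_right (le_of_lt (S m).2)
      _ ≤ (S 0).1.1 + (S 0).1.2 := hsum_anti (Nat.zero_le m)
  set x : ℝ := ⨆ n, (S n).1.1 with hxdef
  have hxge : ∀ n, (S n).1.1 ≤ x := fun n => le_ciSup hbdd n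
  have hxle : ∀ n, x ≤ (S n).1.1 + (S n).1.2 := by
    intro n
    apply ciSup_le
    intro m
    rcases le_total m n with h | h
    · exact le_trans (hAmono h) (le_add_of_nonneg_right (le_of_lt (S n).2))
    · calc (S m).1.1 ≤ (S m).1.1 + (S m).1.2 := le_add_of_nonneg_right (le_of_lt (S m).2)
        _ ≤ (S n).1.1 + (S n).1.2 := hsum_anti h
  have hxlt : ∀ n, x < (S n).1.1 + (S n).1.2 :=
    fun n => lt_of_le_of_lt (hxle (n+1)) (hdec n)
  have hxW : ∀ n, x ∈ (W n).set := by
    intro n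
    apply (hBleg n).1
    rw [hBdef]
    simp only
    rw [mkB_set]
    exact ⟨hxge (n+1), hxle (n+1)⟩
  have hxE := Hcap x hxW
  have hx0 : x ∈ ⋃ j, Ipieces j := by
    have h := hxE 0
    simpa using h
  rw [Set.mem_iUnion] at hx0
  obtain ⟨j0, hj0⟩ := hx0
  obtain ⟨p, hp⟩ : ∃ p : Addr, x ∈ pieceSet p := ⟨eA.symm j0, hj0⟩
  obtain ⟨⟨ip, es, o⟩, ho, hes⟩ := p
  have hxblk : x ∈ Set.Ico A₀ (A₀ + A₀) := by
    constructor
    · rw [← hs0A]; exact hxge 0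
    · have h := hxlt 0
      rwa [hs0A, hs0L] at h
  by_cases hip : ip = i
  · subst hip
    obtain ⟨w, hwlen, hwb, hwA, hwL⟩ := hword (es.length + 1)
    have hxcell : x ∈ cellSet (N:ℝ) A₀ A₀ w := by
      constructor
      · rw [← hwA]; exact hxge _
      · rw [hwlen, ← hwA, ← hwL]
        exact hxlt _
    have hne : w ≠ wordOf es o := by
      intro he
      have hmem : 2*o+1 ∈ w := by
        rw [he]
        exact List.mem_append_right _ (by simp)
      obtain ⟨t, ht⟩ := (hwb _ hmem).1
      omega
    have hNhalf : ((N:ℕ):ℝ) = ((2 * half i : ℕ) : ℝ) := by rw [hNdef, Nb_eq]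
    have hdisj := cell_disj_samelen hNr w (wordOf es o) A₀ A₀ hA₀
      (fun l hl => lt_cast (hwb l hl).2)
      (hNhalf ▸ wordOf_bound hes ho)
      (by rw [hwlen, wordOf_length]) hne
    have hps : x ∈ cellSet ((N:ℕ):ℝ) A₀ A₀ (wordOf es o) := by
      have : pieceSet ⟨(i, es, o), ho, hes⟩ =
          cellSet ((N:ℕ):ℝ) A₀ A₀ (wordOf es o) := by
        rw [hNdef, hA₀def]; rfl
      rwa [this] at hp
    exact Set.disjoint_left.1 hdisj hxcell hps
  · have h1 := pieceSet_subset_block ⟨(ip, es, o), ho, hes⟩ hp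
    have h2 : x ∈ Set.Ico (blA i) (blA i + blA i) := by rwa [← hA₀def]
    exact Set.disjoint_left.1 (block_disj (fun he => hip he.symm)) h2 h1

end BadGame

open MeasureTheory

/-- **A bad example.**  There exists a measurable map `f`, defined (via countably many
disjoint half-open subintervals `I j` of `(0,1)` whose lengths sum to `1`) Lebesgue-almost
everywhere on `(0,1)`, linear and onto `[0,1)` on each piece, such that for every `α > 0`
there is `β ∈ (0,1)` for which the set of points all of whose iterates stay in the domain
of definition `⋃ j, I j` is not `(α,β)`-winning for Schmidt's game on `[0,1]`. -/
theorem exists_bad_map :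
    ∃ (I : ℕ → Set ℝ) (f : ℝ → ℝ), Measurable f ∧
      (∀ j, ∃ a b : ℝ, a < b ∧ I j = Set.Ico a b) ∧
      (∀ j, I j ⊆ Set.Ioo (0:ℝ) 1) ∧
      (Pairwise fun i j => Disjoint (I i) (I j)) ∧
      (∑' j, volume (I j)) = 1 ∧
      (∀ j, ∃ c d : ℝ, ∀ x ∈ I j, f x = c * x + d) ∧
      (∀ j, f '' I j = Set.Ico (0:ℝ) 1) ∧
      ∀ α : ℝ, 0 < α →
        ∃ β : ℝ, 0 < β ∧ β < 1 ∧
          ¬ IsWinningParam α β {x | ∀ n : ℕ, f^[n] x ∈ ⋃ j, I j} := by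
  classical
  refine ⟨BadGame.Ipieces, BadGame.fmap, BadGame.fmap_measurable, ?_, BadGame.Ipieces_subset,
    BadGame.Ipieces_disjoint, BadGame.sum_vol, ?_, ?_, ?_⟩
  · intro j
    refine ⟨BadGame.pL (BadGame.eA.symm j),
      BadGame.pL (BadGame.eA.symm j) + BadGame.plen (BadGame.eA.symm j), ?_, ?_⟩
    · have := BadGame.plen_pos (BadGame.eA.symm j)
      linarith
    · exact BadGame.pieceSet_eq _
  · intro j
    exact ⟨1 / BadGame.plen (BadGame.eA.symm j),
      -(BadGame.pL (BadGame.eA.symm j)) / BadGame.plen (BadGame.eA.symm j),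
      BadGame.fmap_affine _⟩
  · intro j
    exact BadGame.fmap_image _
  · intro α hα
    exact BadGame.not_winning hα
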